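/- Let A : ℝ → Matrix (Fin (2*d)) (Fin (2*d)) ℝ be continuous (smooth), and let α : ℝ → ℝ be continuous with α(t) = 0 for t ≤ 0 and α(t) > 0 for t > 0. Let ξ : ℝ → Matrix (Fin (2*d)) (Fin d) ℝ solve ξ'(s) = A(s)·ξ(s) + α(s)·B with ξ(0) = 0, where B is the 2d×d matrix whose top d×d block is the identity and bottom block is zero. Write ξ₁₁(s) for the top d×d block of ξ(s). Then there exists ε₀ > 0 such that for all s ∈ (0, ε₀), det ξ₁₁(s) > ( (1/2) ∫₀ˢ α(t) dt )^d. -/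

import Mathlib

open MeasureTheory Set Filter

/-- Auxiliary Grönwall-type bound: if a continuous `f` with `f 0 = 0` satisfies
`f s ≤ K * ∫₀ˢ f + E s` on `[0, ε]` with `K * ε ≤ 1/2` and `E` monotone, then `f ≤ 2 E`. -/
lemma gron_aux (f E : ℝ → ℝ) (hf : Continuous f) (hf0 : f 0 = 0)
    (K ε : ℝ) (hK : 0 ≤ K) (hKε : K * ε ≤ 1/2)
    (hE : ∀ ⦃t s : ℝ⦄, 0 ≤ t → t ≤ s → E t ≤ E s)
    (hyp : ∀ s ∈ Set.Icc (0:ℝ) ε, f s ≤ K * (∫ t in (0:ℝ)..s, f t) + E s) :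
    ∀ s ∈ Set.Icc (0:ℝ) ε, f s ≤ 2 * E s := by
  intro s hs
  obtain ⟨t0, ht0mem, hmax⟩ :=
    isCompact_Icc.exists_isMaxOn (Set.nonempty_Icc.2 hs.1) hf.continuousOn
  have h0s : (0:ℝ) ∈ Set.Icc 0 s := ⟨le_refl _, hs.1⟩
  have hft0 : 0 ≤ f t0 := by simpa [hf0] using hmax h0s
  have ht00 : 0 ≤ t0 := ht0mem.1
  have ht0ε : t0 ≤ ε := ht0mem.2.trans hs.2
  have hint : (∫ t in (0:ℝ)..t0, f t) ≤ t0 * f t0 := by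
    calc (∫ t in (0:ℝ)..t0, f t) ≤ ∫ _t in (0:ℝ)..t0, f t0 := by
          apply intervalIntegral.integral_mono_on ht00 (hf.intervalIntegrable _ _)
            intervalIntegrable_const
          intro x hx; exact hmax ⟨hx.1, hx.2.trans ht0mem.2⟩
      _ = t0 * f t0 := by simp [mul_comm]
  have h1 : f t0 ≤ K * (t0 * f t0) + E s := by
    have := hyp t0 ⟨ht00, ht0ε⟩
    have hE' : E t0 ≤ E s := hE ht00 ht0mem.2
    nlinarith [mul_le_mul_of_nonneg_left hint hK]
  have hKt : K * t0 ≤ 1/2 := le_trans (mul_le_mul_of_nonneg_left ht0ε hK) hKε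
  have h2 : f t0 ≤ 2 * E s := by nlinarith
  exact le_trans (hmax ⟨hs.1, le_refl s⟩) h2

set_option maxHeartbeats 1000000 in
theorem stmt_0 (d : ℕ) (hd : 0 < d)
    (A : ℝ → Matrix (Fin (2*d)) (Fin (2*d)) ℝ)
    (hA : ∀ i j, Continuous fun s => A s i j)
    (α : ℝ → ℝ) (hα : Continuous α)
    (hα0 : ∀ t ≤ (0:ℝ), α t = 0) (hαpos : ∀ t > (0:ℝ), 0 < α t)
    (B : Matrix (Fin (2*d)) (Fin d) ℝ)
    (hB : B = Matrix.of fun (i : Fin (2*d)) (j : Fin d) => if (i : ℕ) = (j : ℕ) then (1:ℝ) else 0)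
    (ξ : ℝ → Matrix (Fin (2*d)) (Fin d) ℝ)
    (hξ0 : ξ 0 = 0)
    (hode : ∀ (s : ℝ) (i : Fin (2*d)) (j : Fin d),
      HasDerivAt (fun s => ξ s i j) ((A s * ξ s) i j + α s * B i j) s) :
    ∃ ε₀ > (0:ℝ), ∀ s ∈ Set.Ioo (0:ℝ) ε₀,
      ((1/2) * ∫ t in (0:ℝ)..s, α t) ^ d <
        Matrix.det (Matrix.of fun i j : Fin d =>
          ξ s (Fin.castLE (by omega) i) j) := by
  have hαnn : ∀ t, 0 ≤ α t := fun t => by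
    rcases le_or_gt t 0 with h | h
    · rw [hα0 t h]
    · exact (hαpos t h).le
  set β : ℝ → ℝ := fun s => ∫ t in (0:ℝ)..s, α t with hβdef
  have hβmono : ∀ ⦃t s : ℝ⦄, 0 ≤ t → t ≤ s → β t ≤ β s := by
    intro t s ht hts
    have hadd := intervalIntegral.integral_add_adjacent_intervals (μ := volume)
      (hα.intervalIntegrable 0 t) (hα.intervalIntegrable t s)
    have hnn : 0 ≤ ∫ u in t..s, α u :=
      intervalIntegral.integral_nonneg hts (fun u _ => hαnn u)
    simp only [hβdef]
    linarith [hadd]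
  have hβnn : ∀ s, 0 ≤ s → 0 ≤ β s := fun s hs => by
    have : β 0 = 0 := by simp [hβdef]
    linarith [hβmono (le_refl (0:ℝ)) hs]
  have hβpos : ∀ s, 0 < s → 0 < β s := fun s hs =>
    intervalIntegral.intervalIntegral_pos_of_pos_on (hα.intervalIntegrable 0 s)
      (fun x hx => hαpos x hx.1) hs
  -- continuity of entries of ξ
  have hξc : ∀ i j, Continuous fun s => ξ s i j := fun i j =>
    continuous_iff_continuousAt.2 fun s => (hode s i j).continuousAt
  have hAξc : ∀ (i : Fin (2*d)) (j : Fin d), Continuous fun t => (A t * ξ t) i j := by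
    intro i j
    have : (fun t => (A t * ξ t) i j) = fun t => ∑ k, A t i k * ξ t k j := by
      funext t; rw [Matrix.mul_apply]
    rw [this]
    exact continuous_finset_sum _ fun k _ => (hA i k).mul (hξc k j)
  have hgc : ∀ (i : Fin (2*d)) (j : Fin d),
      Continuous fun t => (A t * ξ t) i j + α t * B i j := fun i j =>
    (hAξc i j).add (hα.mul continuous_const)
  -- integral representation
  have hrep : ∀ (s : ℝ) (i : Fin (2*d)) (j : Fin d),
      ξ s i j = ∫ t in (0:ℝ)..s, ((A t * ξ t) i j + α t * B i j) := by
    intro s i j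
    have h := intervalIntegral.integral_eq_sub_of_hasDerivAt
      (f := fun t => ξ t i j) (fun t _ => hode t i j) (((hgc i j).intervalIntegrable 0 s))
    rw [h]; simp [hξ0]
  -- bound on A
  have hFc : Continuous fun t => ∑ i : Fin (2*d), ∑ k, |A t i k| :=
    continuous_finset_sum _ fun i _ => continuous_finset_sum _ fun k _ => (hA i k).abs
  obtain ⟨t₁, _, hCmax⟩ :=
    isCompact_Icc.exists_isMaxOn (Set.nonempty_Icc.2 (zero_le_one' ℝ)) hFc.continuousOn
  set C : ℝ := ∑ i : Fin (2*d), ∑ k, |A t₁ i k| with hCdef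
  have hCnn : 0 ≤ C :=
    Finset.sum_nonneg fun i _ => Finset.sum_nonneg fun k _ => abs_nonneg _
  have hAC : ∀ t ∈ Set.Icc (0:ℝ) 1, ∀ i : Fin (2*d), (∑ k, |A t i k|) ≤ C := by
    intro t ht i
    refine le_trans ?_ (hCmax ht)
    exact Finset.single_le_sum (f := fun i => ∑ k, |A t i k|)
      (fun i _ => Finset.sum_nonneg fun k _ => abs_nonneg _) (Finset.mem_univ i)
  -- the sum of absolute values of entries of ξ
  set f : ℝ → ℝ := fun t => ∑ i : Fin (2*d), ∑ j : Fin d, |ξ t i j| with hfdef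
  have hfc : Continuous f :=
    continuous_finset_sum _ fun i _ => continuous_finset_sum _ fun j _ => (hξc i j).abs
  have hf0 : f 0 = 0 := by simp [hfdef, hξ0]
  have hfnn : ∀ t, 0 ≤ f t := fun t =>
    Finset.sum_nonneg fun i _ => Finset.sum_nonneg fun j _ => abs_nonneg _
  have hf_entry : ∀ (t : ℝ) (i : Fin (2*d)) (j : Fin d), |ξ t i j| ≤ f t := by
    intro t i j
    refine le_trans ?_ (Finset.single_le_sum (f := fun i => ∑ j, |ξ t i j|)
      (fun i _ => Finset.sum_nonneg fun j _ => abs_nonneg _) (Finset.mem_univ i))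
    exact Finset.single_le_sum (f := fun j => |ξ t i j|)
      (fun j _ => abs_nonneg _) (Finset.mem_univ j)
  -- pointwise bound on (A ξ) entries
  have hAξb : ∀ t ∈ Set.Icc (0:ℝ) 1, ∀ (i : Fin (2*d)) (j : Fin d),
      |(A t * ξ t) i j| ≤ C * f t := by
    intro t ht i j
    rw [Matrix.mul_apply]
    refine le_trans (Finset.abs_sum_le_sum_abs _ _) ?_
    calc ∑ k, |A t i k * ξ t k j| ≤ ∑ k, |A t i k| * f t := by
          refine Finset.sum_le_sum fun k _ => ?_
          rw [abs_mul]
          exact mul_le_mul_of_nonneg_left (hf_entry t k j) (abs_nonneg _)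
      _ = (∑ k, |A t i k|) * f t := (Finset.sum_mul _ _ _).symm
      _ ≤ C * f t := mul_le_mul_of_nonneg_right (hAC t ht i) (hfnn t)
  -- entrywise integral bound
  have hb1 : ∀ s ∈ Set.Icc (0:ℝ) 1, ∀ (i : Fin (2*d)) (j : Fin d),
      |ξ s i j| ≤ ∫ t in (0:ℝ)..s, (C * f t + α t) := by
    intro s hs i j
    rw [hrep s i j]
    refine le_trans (intervalIntegral.abs_integral_le_integral_abs hs.1) ?_
    refine intervalIntegral.integral_mono_on hs.1
      ((hgc i j).abs.intervalIntegrable 0 s)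
      (((continuous_const.mul hfc).add hα).intervalIntegrable 0 s) ?_
    intro t ht
    have h1 : |(A t * ξ t) i j| ≤ C * f t :=
      hAξb t ⟨ht.1, ht.2.trans hs.2⟩ i j
    have h2 : |α t * B i j| ≤ α t := by
      rw [hB, abs_mul, abs_of_nonneg (hαnn t)]
      by_cases h : ((i : ℕ) = (j : ℕ)) <;>
        simp [Matrix.of_apply, h, hαnn t]
    calc |(A t * ξ t) i j + α t * B i j|
        ≤ |(A t * ξ t) i j| + |α t * B i j| := abs_add_le _ _
      _ ≤ C * f t + α t := add_le_add h1 h2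
  set D : ℝ := ((2*d : ℕ) : ℝ) * (d : ℕ) with hDdef
  have hDnn : (0:ℝ) ≤ D := by positivity
  have hsplit : ∀ s : ℝ, (∫ t in (0:ℝ)..s, (C * f t + α t))
      = C * (∫ t in (0:ℝ)..s, f t) + β s := by
    intro s
    rw [intervalIntegral.integral_add (f := fun t => C * f t) ((continuous_const.mul hfc).intervalIntegrable 0 s)
      (hα.intervalIntegrable 0 s), intervalIntegral.integral_const_mul]
  -- the Grönwall hypothesis
  have hfs : ∀ s ∈ Set.Icc (0:ℝ) 1,
      f s ≤ (D * C) * (∫ t in (0:ℝ)..s, f t) + D * β s := by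
    intro s hs
    have : f s ≤ D * ∫ t in (0:ℝ)..s, (C * f t + α t) := by
      have := hb1 s hs
      calc f s = ∑ i : Fin (2*d), ∑ j : Fin d, |ξ s i j| := rfl
        _ ≤ ∑ _i : Fin (2*d), ∑ _j : Fin d, ∫ t in (0:ℝ)..s, (C * f t + α t) :=
            Finset.sum_le_sum fun i _ => Finset.sum_le_sum fun j _ => this i j
        _ = D * ∫ t in (0:ℝ)..s, (C * f t + α t) := by
            simp [hDdef, Finset.sum_const, Finset.card_univ, nsmul_eq_mul]; ring
    rw [hsplit s] at this
    calc f s ≤ D * (C * (∫ t in (0:ℝ)..s, f t) + β s) := this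
      _ = (D * C) * (∫ t in (0:ℝ)..s, f t) + D * β s := by ring
  set ε : ℝ := min 1 (1/(2*(D*C+1))) with hεdef
  have hεpos : 0 < ε := lt_min one_pos (by positivity)
  have hε1 : ε ≤ 1 := min_le_left _ _
  have hKε : (D * C) * ε ≤ 1/2 := by
    have hε2 : ε ≤ 1/(2*(D*C+1)) := min_le_right _ _
    have h2 : (0:ℝ) < 2*(D*C+1) := by positivity
    rw [le_div_iff₀ h2] at hε2
    nlinarith [mul_nonneg hDnn hCnn, hεpos.le]
  have hf2 : ∀ s ∈ Set.Icc (0:ℝ) ε, f s ≤ 2 * (D * β s) := by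
    refine gron_aux f (fun s => D * β s) hfc hf0 (D*C) ε
      (mul_nonneg hDnn hCnn) hKε ?_ ?_
    · intro t s ht hts
      exact mul_le_mul_of_nonneg_left (hβmono ht hts) hDnn
    · intro s hs
      exact hfs s ⟨hs.1, hs.2.trans hε1⟩
  -- the error bound
  have herr : ∀ s ∈ Set.Ioo (0:ℝ) ε, ∀ (i j : Fin d),
      |ξ s (Fin.castLE (by omega) i) j - β s * (1 : Matrix (Fin d) (Fin d) ℝ) i j|
        ≤ (2 * (D * C)) * s * β s := by
    intro s hs i j
    have hs1 : s ∈ Set.Icc (0:ℝ) 1 := ⟨hs.1.le, hs.2.le.trans hε1⟩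
    set i' : Fin (2*d) := Fin.castLE (by omega) i with hi'def
    have hBval : B i' j = (1 : Matrix (Fin d) (Fin d) ℝ) i j := by
      rw [hB, Matrix.one_apply]
      simp only [Matrix.of_apply, hi'def, Fin.coe_castLE]
      by_cases h : i = j
      · simp [h]
      · simp [h, Fin.val_eq_val]
    have hsplit2 : ξ s i' j = (∫ t in (0:ℝ)..s, (A t * ξ t) i' j)
        + β s * (1 : Matrix (Fin d) (Fin d) ℝ) i j := by
      rw [hrep s i' j,
        intervalIntegral.integral_add (g := fun t => α t * B i' j) ((hAξc i' j).intervalIntegrable 0 s)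
          ((hα.mul continuous_const).intervalIntegrable 0 s),
        intervalIntegral.integral_mul_const, hBval]
    rw [hsplit2]
    have habs : |∫ t in (0:ℝ)..s, (A t * ξ t) i' j| ≤ (2 * (D * C)) * s * β s := by
      refine le_trans (intervalIntegral.abs_integral_le_integral_abs hs.1.le) ?_
      have hstep : (∫ t in (0:ℝ)..s, |(A t * ξ t) i' j|)
          ≤ ∫ _t in (0:ℝ)..s, C * (2 * (D * β s)) := by
        refine intervalIntegral.integral_mono_on hs.1.le
          ((hAξc i' j).abs.intervalIntegrable 0 s) intervalIntegrable_const ?_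
        intro t ht
        have h1 : |(A t * ξ t) i' j| ≤ C * f t :=
          hAξb t ⟨ht.1, ht.2.trans hs1.2⟩ i' j
        have h2 : f t ≤ 2 * (D * β t) := hf2 t ⟨ht.1, ht.2.trans hs.2.le⟩
        have h3 : β t ≤ β s := hβmono ht.1 ht.2
        have h4 : C * f t ≤ C * (2 * (D * β t)) := mul_le_mul_of_nonneg_left h2 hCnn
        have h5 : C * (2 * (D * β t)) ≤ C * (2 * (D * β s)) := by
          have : D * β t ≤ D * β s := mul_le_mul_of_nonneg_left h3 hDnn
          nlinarith [hCnn]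
        linarith
      refine le_trans hstep ?_
      rw [intervalIntegral.integral_const]
      have : (s - 0) • (C * (2 * (D * β s))) = (2 * (D * C)) * s * β s := by
        simp [smul_eq_mul]; ring
      rw [this]
    simpa using habs
  -- pass to the normalized matrix and take the limit
  set g : ℝ → Matrix (Fin d) (Fin d) ℝ :=
    fun s => Matrix.of fun i j => ξ s (Fin.castLE (by omega) i) j / β s with hgdef
  have hIooev : Set.Ioo (0:ℝ) ε ∈ nhdsWithin (0:ℝ) (Set.Ioi 0) :=
    Ioo_mem_nhdsGT_of_mem ⟨le_refl _, hεpos⟩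
  have hgt : Tendsto g (nhdsWithin (0:ℝ) (Set.Ioi 0)) (nhds 1) := by
    refine tendsto_pi_nhds.2 ?_
    intro i
    refine tendsto_pi_nhds.2 ?_
    intro j
    have hsub : Tendsto (fun s => g s i j - (1 : Matrix (Fin d) (Fin d) ℝ) i j)
        (nhdsWithin (0:ℝ) (Set.Ioi 0)) (nhds 0) := by
      apply squeeze_zero_norm' (a := fun s => (2 * (D * C)) * s)
      · filter_upwards [hIooev] with s hs
        have hβs := hβpos s hs.1
        have := herr s hs i j
        rw [Real.norm_eq_abs]
        have heq : g s i j - (1 : Matrix (Fin d) (Fin d) ℝ) i j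
            = (ξ s (Fin.castLE (by omega) i) j - β s * (1 : Matrix (Fin d) (Fin d) ℝ) i j) / β s := by
          simp only [hgdef, Matrix.of_apply]
          field_simp
        rw [heq, abs_div, abs_of_pos hβs, div_le_iff₀ hβs]
        calc |ξ s (Fin.castLE (by omega) i) j - β s * (1 : Matrix (Fin d) (Fin d) ℝ) i j|
            ≤ (2 * (D * C)) * s * β s := this
          _ = 2 * (D * C) * s * β s := by ring
      · have : Tendsto (fun s : ℝ => (2 * (D * C)) * s) (nhds 0) (nhds ((2 * (D*C)) * 0)) :=
          (continuous_const.mul continuous_id).tendsto 0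
        simpa using this.mono_left nhdsWithin_le_nhds
    have := hsub.add (tendsto_const_nhds
      (x := (1 : Matrix (Fin d) (Fin d) ℝ) i j) (f := nhdsWithin (0:ℝ) (Set.Ioi 0)))
    simpa using this
  have hdet : Tendsto (fun s => (g s).det) (nhdsWithin (0:ℝ) (Set.Ioi 0)) (nhds 1) := by
    have hcd : Continuous (Matrix.det : Matrix (Fin d) (Fin d) ℝ → ℝ) :=
      Continuous.matrix_det continuous_id
    have := (hcd.tendsto (1 : Matrix (Fin d) (Fin d) ℝ)).comp hgt
    simpa [Function.comp_def, Matrix.det_one] using this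
  have hev : ∀ᶠ s in nhdsWithin (0:ℝ) (Set.Ioi 0), 1/2 < (g s).det :=
    hdet.eventually (eventually_gt_nhds (by norm_num))
  have hcomb := hev.and (eventually_of_mem hIooev (fun s hs => hs))
  rw [eventually_iff, mem_nhdsGT_iff_exists_Ioo_subset] at hcomb
  obtain ⟨u, hu, hsubu⟩ := hcomb
  refine ⟨u, hu, ?_⟩
  intro s hsu
  obtain ⟨hdetgs, hsε⟩ := hsubu hsu
  have hβs := hβpos s hsε.1
  have hMeq : (Matrix.of fun i j : Fin d => ξ s (Fin.castLE (by omega) i) j)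
      = β s • g s := by
    funext i j
    simp only [hgdef, Matrix.of_apply, Matrix.smul_apply, smul_eq_mul]
    field_simp
  rw [hMeq, Matrix.det_smul]
  have hcard : Fintype.card (Fin d) = d := Fintype.card_fin d
  rw [hcard]
  have hpow : ((1:ℝ)/2) ^ d ≤ 1/2 := by
    calc ((1:ℝ)/2) ^ d ≤ ((1:ℝ)/2) ^ 1 :=
      pow_le_pow_of_le_one (by norm_num) (by norm_num) hd
    _ = 1/2 := pow_one _
  have hβpow : (0:ℝ) < (β s) ^ d := pow_pos hβs d
  calc ((1/2) * β s) ^ d = ((1:ℝ)/2) ^ d * (β s) ^ d := mul_pow _ _ _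
    _ ≤ (1/2) * (β s) ^ d := mul_le_mul_of_nonneg_right hpow hβpow.le
    _ < (g s).det * (β s) ^ d := by nlinarith
    _ = (β s) ^ d • (g s).det := by rw [smul_eq_mul]; ring
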